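/- (Corollary for purely imaginary index set.) Suppose all indices in I are imaginary (⟨h_i,α_j⟩ ≤ 0 for all i,j). Then the set Θ_ι of linear forms generated from coordinate forms x_j by the operators S_k consists only of nonnegative linear combinations of the coordinate forms x_j; consequently condition (i) of the polyhedral description (ψ(x) ≥ 0 for all ψ ∈ Θ_ι) holds automatically for every x with nonnegative entries. -/
import Mathlib


open scoped BigOperators
open Classical

section ZCrystal

variable {I : Type*}

/-- Eventually zero sequences of nonnegative integers (positions `1,2,3,...`). -/
def EvZero (x : ℕ → ℕ) : Prop := ∃ N, ∀ k ≥ N, x k = 0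

/-- `ι = (..., i_2, i_1)` satisfies: consecutive indices differ and every index
appears infinitely often. -/
def GoodSeq (ι : ℕ → I) : Prop :=
  (∀ k, 1 ≤ k → ι k ≠ ι (k + 1)) ∧ ∀ i : I, {k : ℕ | 1 ≤ k ∧ ι k = i}.Infinite

/-- `σ_k(x)`: `x_k + Σ_{j>k} ⟨h_{i_k}, α_{i_j}⟩ x_j` if `i_k` is real,
`Σ_{j>k} ⟨h_{i_k}, α_{i_j}⟩ x_j` if `i_k` is imaginary. -/
noncomputable def sigZ (a : I → I → ℤ) (ι : ℕ → I) (re : I → Prop) (x : ℕ → ℕ) (k : ℕ) : ℤ :=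
  (if re (ι k) then (x k : ℤ) else 0) +
    ∑ᶠ j : ℕ, if k < j then a (ι k) (ι j) * (x j : ℤ) else 0

/-- `σ^{(i)}(x) = max_{k : i_k = i} σ_k(x)`. -/
noncomputable def sigSup (a : I → I → ℤ) (ι : ℕ → I) (re : I → Prop) (x : ℕ → ℕ) (i : I) : ℤ :=
  sSup {z : ℤ | ∃ k : ℕ, 1 ≤ k ∧ ι k = i ∧ sigZ a ι re x k = z}

/-- `n_f = min {k | i_k = i, σ_k(x) = σ^{(i)}(x)}`. -/
noncomputable def nfPos (a : I → I → ℤ) (ι : ℕ → I) (re : I → Prop) (x : ℕ → ℕ) (i : I) : ℕ :=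
  sInf {k : ℕ | 1 ≤ k ∧ ι k = i ∧ sigZ a ι re x k = sigSup a ι re x i}

/-- The Kashiwara operator `f̃_i`: add `1` at position `n_f`. -/
noncomputable def ftil (a : I → I → ℤ) (ι : ℕ → I) (re : I → Prop) (i : I) (x : ℕ → ℕ) :
    ℕ → ℕ :=
  fun k => if k = nfPos a ι re x i then x k + 1 else x k

/-- `k^{(-)}`: the largest `j < k` with `i_j = i_k` (and `0` if there is none). -/
noncomputable def kminus (ι : ℕ → I) (k : ℕ) : ℕ := sSup {j : ℕ | 1 ≤ j ∧ j < k ∧ ι j = ι k}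

/-- `k^{(+)}`: the smallest `j > k` with `i_j = i_k`. -/
noncomputable def kplus (ι : ℕ → I) (k : ℕ) : ℕ := sInf {j : ℕ | k < j ∧ ι j = ι k}

/-- `n_e`: for real `i` the largest maximizer of `σ`, for imaginary `i` equal to `n_f`. -/
noncomputable def nePos (a : I → I → ℤ) (ι : ℕ → I) (re : I → Prop) (x : ℕ → ℕ) (i : I) : ℕ :=
  if re i then sSup {k : ℕ | 1 ≤ k ∧ ι k = i ∧ sigZ a ι re x k = sigSup a ι re x i}
  else nfPos a ι re x i

/-- `Σ_{s<j<t} ⟨h_i, α_{i_j}⟩ x_j`. -/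
def betw (a : I → I → ℤ) (ι : ℕ → I) (i : I) (x : ℕ → ℕ) (s t : ℕ) : ℤ :=
  ∑ j ∈ Finset.Ioo s t, a i (ι j) * (x j : ℤ)

/-- The condition (EC) under which `ẽ_i x ≠ 0`. -/
def EC (a : I → I → ℤ) (ι : ℕ → I) (re : I → Prop) (x : ℕ → ℕ) (i : I) : Prop :=
  if re i then 0 < sigSup a ι re x i
  else kminus ι (nePos a ι re x i) = 0 ∨ 1 < x (nePos a ι re x i) ∨
    (x (nePos a ι re x i) = 1 ∧
      betw a ι i x (kminus ι (nePos a ι re x i)) (nePos a ι re x i) < 0)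

/-- The Kashiwara operator `ẽ_i`: subtract `1` at position `n_e` when (EC) holds,
`0` (i.e. `none`) otherwise. -/
noncomputable def etil (a : I → I → ℤ) (ι : ℕ → I) (re : I → Prop) (i : I) (x : ℕ → ℕ) :
    Option (ℕ → ℕ) :=
  if EC a ι re x i then
    some (fun k => if k = nePos a ι re x i then x k - 1 else x k)
  else none

end ZCrystal

section Theta

variable {I : Type*}

/-- The linear form `β_k` (as a coefficient sequence), with `β_0 = 0`. -/
noncomputable def betaForm (a : I → I → ℤ) (ι : ℕ → I) (re : I → Prop) (k : ℕ) : ℕ → ℤ :=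
  fun j =>
    if k = 0 then 0
    else if re (ι k) then
      (if j = k then 1 else 0) + (if k < j ∧ j < kplus ι k then a (ι k) (ι j) else 0)
        + (if j = kplus ι k then 1 else 0)
    else if k < j ∧ j ≤ kplus ι k then a (ι k) (ι j) else 0

/-- The piecewise-linear operator `S_k` on linear forms `ψ = Σ ψ_j x_j`:
`S_k ψ = ψ - ψ_k β_k` if `ψ_k > 0` and `i_k` real,
`S_k ψ = ψ - ψ_k (x_k + Σ_{k<j<k^{(+)}}⟨h_{i_k},α_{i_j}⟩x_j - x_{k^{(+)}})` if `ψ_k > 0`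
and `i_k` imaginary, and `S_k ψ = ψ - ψ_k β_{k^{(-)}}` if `ψ_k ≤ 0`. -/
noncomputable def Sop (a : I → I → ℤ) (ι : ℕ → I) (re : I → Prop) (k : ℕ) (ψ : ℕ → ℤ) :
    ℕ → ℤ :=
  if 0 < ψ k then
    if re (ι k) then fun j => ψ j - ψ k * betaForm a ι re k j
    else fun j => ψ j - ψ k * ((if j = k then 1 else 0)
        + (if k < j ∧ j < kplus ι k then a (ι k) (ι j) else 0)
        - (if j = kplus ι k then 1 else 0))
  else fun j => ψ j - ψ k * betaForm a ι re (kminus ι k) j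

/-- The set `Θ_ι` of linear forms obtained from coordinate forms `x_s` by applying
the operators `S_k`. -/
inductive InTheta (a : I → I → ℤ) (ι : ℕ → I) (re : I → Prop) : (ℕ → ℤ) → Prop
  | coord (s : ℕ) (hs : 1 ≤ s) : InTheta a ι re (fun j => if j = s then 1 else 0)
  | step (ψ : ℕ → ℤ) (k : ℕ) (hk : 1 ≤ k) (h : InTheta a ι re ψ) :
      InTheta a ι re (Sop a ι re k ψ)

/-- Evaluation of a linear form on a sequence: `ψ(x) = Σ_j ψ_j x_j`. -/
noncomputable def evalF (ψ : ℕ → ℤ) (x : ℕ → ℕ) : ℤ := ∑ᶠ j : ℕ, ψ j * (x j : ℤ)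

end Theta

/-- when all indices are imaginary (`⟨h_i,α_j⟩ ≤ 0` for all `i,j`),
every form in `Θ_ι` is a nonnegative linear combination of the coordinate forms;
consequently `ψ(x) ≥ 0` for every `ψ ∈ Θ_ι` and every `x` with nonnegative entries. -/
theorem stmt15 {I : Type*} (a : I → I → ℤ) (ι : ℕ → I) (re : I → Prop)
    (hι : GoodSeq ι) (him : ∀ i : I, ¬ re i) (hneg : ∀ i j : I, a i j ≤ 0) :
    (∀ ψ : ℕ → ℤ, InTheta a ι re ψ → ∀ j : ℕ, 0 ≤ ψ j) ∧
    (∀ ψ : ℕ → ℤ, InTheta a ι re ψ → ∀ x : ℕ → ℕ, EvZero x → 0 ≤ evalF ψ x) := by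
  have hkp : ∀ k : ℕ, k < kplus ι k := by
    intro k
    obtain ⟨j, hj, hkj⟩ := (hι.2 (ι k)).exists_gt k
    have hne : {j : ℕ | k < j ∧ ι j = ι k}.Nonempty := ⟨j, hkj, hj.2⟩
    exact (Nat.sInf_mem hne).1
  have key : ∀ ψ : ℕ → ℤ, InTheta a ι re ψ → ∀ j : ℕ, 0 ≤ ψ j := by
    intro ψ h
    induction h with
    | coord s hs => intro j; dsimp only; split <;> norm_num
    | step ψ k hk h ih =>
      intro j
      by_cases hpos : 0 < ψ k
      · simp only [Sop, if_pos hpos, if_neg (him (ι k))]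
        by_cases hjk : j = k
        · subst hjk
          have h1 : ¬ (j < j ∧ j < kplus ι j) := by simp
          have h2 : j ≠ kplus ι j := (hkp j).ne
          simp [h1, h2]
        · by_cases hjp : j = kplus ι k
          · have h1 : ¬ (k < j ∧ j < kplus ι k) := by
              rintro ⟨-, h2⟩; exact absurd hjp h2.ne
            simp only [if_neg hjk, if_neg h1, if_pos hjp]
            have := ih j
            linarith
          · simp only [if_neg hjk, if_neg hjp]
            by_cases hb : k < j ∧ j < kplus ι k
            · simp only [if_pos hb]
              have ha : a (ι k) (ι j) ≤ 0 := hneg _ _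
              have : ψ k * (0 + a (ι k) (ι j) - 0) ≤ 0 :=
                mul_nonpos_of_nonneg_of_nonpos hpos.le (by linarith)
              have := ih j
              linarith
            · simp only [if_neg hb]
              have := ih j
              simp
              linarith
      · have hz : ψ k = 0 := le_antisymm (not_lt.mp hpos) (ih k)
        simp only [Sop, if_neg hpos, hz, zero_mul, sub_zero]
        exact ih j
  refine ⟨key, fun ψ h x hx => ?_⟩
  exact finsum_nonneg fun j => mul_nonneg (key ψ h j) (Int.natCast_nonneg _)
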